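/- Let C = {s ∈ ℝⁿ : b(s) ≥ 0} for a continuously differentiable function b : ℝⁿ → ℝ, and consider the control system ṡ = f(s) + g(s)a with f, g locally Lipschitz. If a Lipschitz continuous feedback controller a(s) satisfies the CBF condition L_f b(s) + L_g b(s) a(s) + α(b(s)) ≥ 0 for all s, where α is a locally Lipschitz class-K function, then the set C is forward invariant: any solution with s(0) ∈ C satisfies s(t) ∈ C for all t ≥ 0 in its interval of existence. -/

import Mathlib

open Set

/-- A class-K function: continuous, strictly increasing, vanishing at 0 (on `[0,∞)`). -/
def IsClassK (α : ℝ → ℝ) : Prop :=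
  ContinuousOn α (Set.Ici 0) ∧ StrictMonoOn α (Set.Ici 0) ∧ α 0 = 0

/-- CBF forward invariance (Theorem of Ames et al.): if a Lipschitz feedback controller
satisfies `L_f b(s) + L_g b(s) a(s) + α(b(s)) ≥ 0` everywhere, then the superlevel set
`C = {s | b s ≥ 0}` is forward invariant along solutions of `ṡ = f(s) + g(s) a(s)`. -/
theorem stmt_0
    {n q : ℕ}
    (b : EuclideanSpace ℝ (Fin n) → ℝ)
    (hb : ContDiff ℝ 1 b)
    (f : EuclideanSpace ℝ (Fin n) → EuclideanSpace ℝ (Fin n))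
    (g : EuclideanSpace ℝ (Fin n) → (EuclideanSpace ℝ (Fin q) →L[ℝ] EuclideanSpace ℝ (Fin n)))
    (hf : LocallyLipschitz f) (hg : LocallyLipschitz g)
    (a : EuclideanSpace ℝ (Fin n) → EuclideanSpace ℝ (Fin q))
    (K : NNReal) (ha : LipschitzWith K a)
    (α : ℝ → ℝ) (hα : IsClassK α) (hαlip : LocallyLipschitz α)
    (hCBF : ∀ x, fderiv ℝ b x (f x) + fderiv ℝ b x (g x (a x)) + α (b x) ≥ 0)
    (s : ℝ → EuclideanSpace ℝ (Fin n)) (T : ℝ)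
    (hsol : ∀ t ∈ Set.Ico (0 : ℝ) T,
      HasDerivAt s (f (s t) + g (s t) (a (s t))) t)
    (hinit : b (s 0) ≥ 0) :
    ∀ t ∈ Set.Ico (0 : ℝ) T, b (s t) ≥ 0 := by
  -- local Lipschitz bound for α near 0
  obtain ⟨K', U, hU, hKU⟩ := hαlip 0
  obtain ⟨ε, hε, hball⟩ := Metric.mem_nhds_iff.1 hU
  set L : ℝ := (K' : ℝ) + 1 with hL
  have hL1 : (1 : ℝ) ≤ L := by have := K'.coe_nonneg; linarith
  have hαbound : ∀ x : ℝ, |x| < ε → α x ≤ L * |x| := by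
    intro x hx
    have hx0 : x ∈ U := hball (by simpa [Metric.mem_ball] using hx)
    have h0 : (0 : ℝ) ∈ U := hball (Metric.mem_ball_self hε)
    have := hKU.dist_le_mul x hx0 0 h0
    rw [hα.2.2] at this
    have h1 : |α x| ≤ (K' : ℝ) * |x| := by
      simpa [Real.dist_eq] using this
    have h2 : α x ≤ (K' : ℝ) * |x| := (le_abs_self _).trans h1
    nlinarith [abs_nonneg x, h2]
  -- derivative of t ↦ b (s t)
  set D : ℝ → ℝ := fun t => (fderiv ℝ b (s t)) (f (s t) + g (s t) (a (s t))) with hD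
  have hderiv : ∀ t ∈ Set.Ico (0 : ℝ) T,
      HasDerivAt (fun t => b (s t)) (D t) t := by
    intro t ht
    exact ((hb.differentiable one_ne_zero (s t)).hasFDerivAt).comp_hasDerivAt t (hsol t ht)
  have hDge : ∀ t ∈ Set.Ico (0 : ℝ) T, -α (b (s t)) ≤ D t := by
    intro t ht
    have := hCBF (s t)
    have hmap : D t = fderiv ℝ b (s t) (f (s t)) + fderiv ℝ b (s t) (g (s t) (a (s t))) := by
      simp [hD, map_add]
    linarith [hmap ▸ (by linarith : -α (b (s t)) ≤ fderiv ℝ b (s t) (f (s t)) + fderiv ℝ b (s t) (g (s t) (a (s t))))]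
  intro t₂ ht₂
  obtain ⟨ht₂0, ht₂T⟩ := ht₂
  -- show b (s t₂) ≥ -c for every c > 0
  rw [ge_iff_le, ← neg_nonpos]
  refine le_of_forall_pos_le_add ?_
  intro c hc
  set δ : ℝ := (min c ε / 2) * Real.exp (-(2 * L * t₂)) with hδdef
  have hminpos : 0 < min c ε / 2 := by positivity
  have hδ : 0 < δ := by positivity
  set B : ℝ → ℝ := fun t => δ * Real.exp (2 * L * t) with hBdef
  have hBpos : ∀ x, 0 < B x := fun x => by positivity
  have hBmono : ∀ x ∈ Set.Icc (0:ℝ) t₂, B x ≤ min c ε / 2 := by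
    intro x hx
    have : Real.exp (2 * L * x) ≤ Real.exp (2 * L * t₂) := by
      apply Real.exp_le_exp.2
      have : 0 ≤ 2 * L := by linarith
      nlinarith [hx.2]
    calc B x = (min c ε / 2) * (Real.exp (-(2 * L * t₂)) * Real.exp (2 * L * x)) := by
            ring
      _ ≤ (min c ε / 2) * (Real.exp (-(2 * L * t₂)) * Real.exp (2 * L * t₂)) := by
            apply mul_le_mul_of_nonneg_left _ hminpos.le
            exact mul_le_mul_of_nonneg_left this (Real.exp_pos _).le
      _ = min c ε / 2 := by rw [← Real.exp_add]; ring_nf; simp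
  have hB' : ∀ x, HasDerivAt B (δ * (2 * L) * Real.exp (2 * L * x)) x := by
    intro x
    have h1 : HasDerivAt (fun t : ℝ => 2 * L * t) (2 * L) x := by
      simpa using (hasDerivAt_id x).const_mul (2 * L)
    have := (h1.exp).const_mul δ
    convert this using 1
    exacts [rfl, rfl, by ring]
  -- apply the fencing lemma on [0, t₂] with f := fun t => -(b (s t))
  have key : ∀ x ∈ Set.Icc (0:ℝ) t₂, -(b (s x)) ≤ B x := by
    apply image_le_of_deriv_right_lt_deriv_boundary
      (f := fun t => -(b (s t))) (f' := fun t => -(D t))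
      (B := B) (B' := fun x => δ * (2 * L) * Real.exp (2 * L * x))
    · -- continuity
      intro x hx
      have hxT : x ∈ Set.Ico (0:ℝ) T := ⟨hx.1, lt_of_le_of_lt hx.2 ht₂T⟩
      exact ((hderiv x hxT).continuousAt.neg).continuousWithinAt
    · intro x hx
      have hxT : x ∈ Set.Ico (0:ℝ) T := ⟨hx.1, lt_of_lt_of_le hx.2 (le_of_lt ht₂T) ⟩
      exact ((hderiv x hxT).neg).hasDerivWithinAt
    · -- initial condition
      have : -(b (s 0)) ≤ 0 := by linarith
      exact this.trans (hBpos 0).le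
    · exact hB'
    · -- contact bound
      intro x hx hcontact
      have hxIcc : x ∈ Set.Icc (0:ℝ) t₂ := ⟨hx.1, hx.2.le⟩
      have hxT : x ∈ Set.Ico (0:ℝ) T := ⟨hx.1, lt_of_lt_of_le hx.2 ht₂T.le⟩
      have hbx : b (s x) = -B x := by linarith [hcontact]
      have habs : |b (s x)| < ε := by
        rw [hbx, abs_neg, abs_of_pos (hBpos x)]
        have := hBmono x hxIcc
        have : B x ≤ ε / 2 := this.trans (by linarith [min_le_right c ε])
        linarith
      have hα1 : α (b (s x)) ≤ L * B x :=
        calc α (b (s x)) ≤ L * |b (s x)| := hαbound _ habs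
          _ = L * B x := by rw [hbx, abs_neg, abs_of_pos (hBpos x)]
      have hD1 : -α (b (s x)) ≤ D x := hDge x hxT
      have : -(D x) ≤ L * B x := by linarith
      have hBx : B x = δ * Real.exp (2 * L * x) := rfl
      calc -(D x) ≤ L * B x := this
        _ < 2 * L * B x := by nlinarith [hBpos x]
        _ = δ * (2 * L) * Real.exp (2 * L * x) := by rw [hBx]; ring
  have hfin := key t₂ ⟨ht₂0, le_refl _⟩
  have hBt₂ : B t₂ ≤ c := by
    have := hBmono t₂ ⟨ht₂0, le_refl _⟩
    linarith [min_le_left c ε]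
  linarith
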